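/- Let $G$ be a group in which the centralizer of every infinite-order element is cyclic. If $g, h \in G$ are elements of infinite order such that $g^m = \eta h^n \eta^{-1}$ for some nonzero integers $m, n$ and some $\eta \in G$, then there exists an element $g_0 \in G$ whose centralizer equals the cyclic subgroup generated by $g_0$, and integers $r, s$ such that $g = g_0^r$, $h = \eta^{-1} g_0^s \eta$, and $mr = ns$. -/
import Mathlib

private lemma zpow_infinite_order {G : Type*} [Group G] {g : G} (hg : ¬ IsOfFinOrder g)
    {k : ℤ} (hk : k ≠ 0) : ¬ IsOfFinOrder (g ^ k) := by
  intro hf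
  obtain ⟨j, hj, hj'⟩ := isOfFinOrder_iff_zpow_eq_one.mp hf
  exact hg (isOfFinOrder_iff_zpow_eq_one.mpr ⟨k * j, mul_ne_zero hk hj, by rwa [zpow_mul]⟩)

private lemma subgroup_cyclic_gen {G : Type*} [Group G] (H : Subgroup G)
    (hc : IsCyclic ↥H) : ∃ c : G, H = Subgroup.zpowers c := by
  obtain ⟨⟨c, hcH⟩, hgen⟩ := hc.exists_generator
  refine ⟨c, le_antisymm ?_ ?_⟩
  · intro x hx
    obtain ⟨k, hk⟩ := hgen ⟨x, hx⟩
    exact ⟨k, by simpa using congrArg Subtype.val hk⟩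
  · intro x hx
    obtain ⟨k, hk⟩ := hx
    exact hk ▸ H.zpow_mem hcH k

theorem conjugate_powers_in_CIC_group {G : Type*} [Group G]
    (hCIC : ∀ g : G, ¬ IsOfFinOrder g → IsCyclic ↥(Subgroup.centralizer {g}))
    (g h η : G) (hg : ¬ IsOfFinOrder g) (hh : ¬ IsOfFinOrder h)
    (m n : ℤ) (hm : m ≠ 0) (hn : n ≠ 0)
    (hconj : g ^ m = η * h ^ n * η⁻¹) :
    ∃ (g₀ : G) (r s : ℤ),
      Subgroup.centralizer {g₀} = Subgroup.zpowers g₀ ∧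
      g = g₀ ^ r ∧ h = η⁻¹ * g₀ ^ s * η ∧ m * r = n * s := by
  set h' : G := η * h * η⁻¹ with hh'
  have hgm : ¬ IsOfFinOrder (g ^ m) := zpow_infinite_order hg hm
  -- the centralizer of g^m is cyclic, generated by some c
  obtain ⟨c, hc⟩ := subgroup_cyclic_gen _ (hCIC _ hgm)
  have hconj' : g ^ m = h' ^ n := by
    rw [hh', conj_zpow]; exact hconj
  -- g ∈ centralizer {g^m}
  have hgmem : g ∈ Subgroup.centralizer {g ^ m} :=
    Subgroup.mem_centralizer_singleton_iff.mpr (Commute.self_zpow g m)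
  have hh'mem : h' ∈ Subgroup.centralizer {g ^ m} := by
    rw [Subgroup.mem_centralizer_singleton_iff, hconj']
    exact Commute.self_zpow h' n
  obtain ⟨r, hr⟩ : g ∈ Subgroup.zpowers c := hc ▸ hgmem
  obtain ⟨s, hs⟩ : h' ∈ Subgroup.zpowers c := hc ▸ hh'mem
  replace hr : c ^ r = g := hr
  replace hs : c ^ s = h' := hs
  -- c has infinite order
  have hcinf : ¬ IsOfFinOrder c := by
    intro hf
    exact hg (hr ▸ hf.zpow)
  have hinj : Function.Injective fun k : ℤ => c ^ k :=
    injective_zpow_iff_not_isOfFinOrder.mpr hcinf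
  -- exponent equation
  have hmr : c ^ (r * m) = c ^ (s * n) := by
    rw [zpow_mul, zpow_mul, hr, hs, hconj']
  have hrs : r * m = s * n := hinj hmr
  -- primitivity of c
  refine ⟨c, r, s, ?_, hr.symm, by rw [hs, hh']; group, by linarith [hrs]⟩
  -- centralizer c is cyclic, generated by d
  obtain ⟨d, hd⟩ := subgroup_cyclic_gen _ (hCIC c hcinf)
  have hcd : c ∈ Subgroup.zpowers d := hd ▸ Subgroup.mem_centralizer_singleton_iff.mpr rfl
  obtain ⟨k, hk⟩ := hcd
  replace hk : d ^ k = c := hk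
  -- d commutes with g^m = c^(r*m)
  have hdc : Commute d c := by
    have : d ∈ Subgroup.centralizer {c} := hd ▸ Subgroup.mem_zpowers d
    exact Subgroup.mem_centralizer_singleton_iff.mp this
  have hdmem : d ∈ Subgroup.centralizer {g ^ m} := by
    rw [Subgroup.mem_centralizer_singleton_iff]
    have : g ^ m = c ^ (r * m) := by rw [zpow_mul, hr]
    rw [this]
    exact hdc.zpow_right (r * m)
  obtain ⟨j, hj⟩ : d ∈ Subgroup.zpowers c := hc ▸ hdmem
  replace hj : c ^ j = d := hj
  have hjk : c ^ (j * k) = c ^ (1 : ℤ) := by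
    rw [zpow_mul, hj, hk, zpow_one]
  have hjk1 : j * k = 1 := hinj hjk
  -- hence zpowers d = zpowers c
  have hdz : Subgroup.zpowers d = Subgroup.zpowers c := by
    apply le_antisymm
    · rw [Subgroup.zpowers_le]; exact ⟨j, hj⟩
    · rw [Subgroup.zpowers_le]
      exact ⟨k, hk⟩
  apply le_antisymm
  · rw [hd, hdz]
  · rw [Subgroup.zpowers_le]
    exact Subgroup.mem_centralizer_singleton_iff.mpr rfl
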